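/- For a > 0 and Re(s) > 0, ∫_C e^{−2πi a |z|²} |z|_C^{s} d^×z = a^{−s} e^{−sπi/2} Γ(s) / (2π)^{s−1}, where |z|_C = |z|², d^×z = dz/|z|_C, and the integral is understood as the limit of the absolutely convergent integrals with a replaced by a − iε, ε → 0⁺. -/

import Mathlib

open MeasureTheory Real Filter
open Set

lemma aux_integrable {r : ℝ} (hr : -1 < r) {c : ℝ} (hc : 0 < c) :
    IntegrableOn (fun t : ℝ => t ^ r * Real.exp (-c * t)) (Set.Ioi 0) := by
  have := integrableOn_rpow_mul_exp_neg_mul_rpow hr one_pos hc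
  simpa [Real.rpow_one] using this

lemma gammaIntegral_complex_coeff {s : ℂ} (hs : 0 < s.re) :
    ∀ b : ℂ, 0 < b.re →
      ∫ t : ℝ in Set.Ioi 0, (t : ℂ) ^ (s - 1) * Complex.exp (-(b * t)) = b ^ (-s) * Complex.Gamma s := by
  set U : Set ℂ := {b : ℂ | 0 < b.re} with hUdef
  have hU : IsOpen U := isOpen_lt continuous_const Complex.continuous_re
  set f : ℂ → ℂ := fun b => ∫ t : ℝ in Set.Ioi 0, (t : ℂ) ^ (s - 1) * Complex.exp (-(b * t)) with hf
  set g : ℂ → ℂ := fun b => b ^ (-s) * Complex.Gamma s with hg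
  -- measurability helper
  have meas : ∀ (w : ℂ) (b : ℂ), AEStronglyMeasurable
      (fun t : ℝ => (t : ℂ) ^ w * Complex.exp (-(b * t))) (volume.restrict (Set.Ioi 0)) := by
    intro w b
    apply ContinuousOn.aestronglyMeasurable _ measurableSet_Ioi
    intro t ht
    refine ContinuousAt.continuousWithinAt (ContinuousAt.mul ?_ ?_)
    · exact (continuousAt_cpow_const (Or.inl (by simpa using ht))).comp
        Complex.continuous_ofReal.continuousAt
    · exact Complex.continuous_exp.continuousAt.comp
        (((continuous_const.mul Complex.continuous_ofReal).neg).continuousAt)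
  -- norm computation
  have hnorm : ∀ (w b : ℂ) (t : ℝ), 0 < t →
      ‖(t : ℂ) ^ w * Complex.exp (-(b * t))‖ = t ^ w.re * Real.exp (-b.re * t) := by
    intro w b t ht
    rw [norm_mul,
      Complex.norm_cpow_eq_rpow_re_of_pos ht, Complex.norm_exp]
    congr 2
    simp [Complex.mul_re]
  -- integrability of the integrand for re b > 0
  have hint : ∀ (w b : ℂ), -1 < w.re → 0 < b.re →
      Integrable (fun t : ℝ => (t : ℂ) ^ w * Complex.exp (-(b * t)))
        (volume.restrict (Set.Ioi 0)) := by
    intro w b hw hb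
    refine Integrable.mono' (aux_integrable hw hb) (meas w b) ?_
    filter_upwards [ae_restrict_mem measurableSet_Ioi] with t ht
    rw [hnorm w b t ht]
  -- f is differentiable on U
  have hfd : DifferentiableOn ℂ f U := by
    intro b₀ hb₀
    have hb₀' : 0 < b₀.re := hb₀
    set ε : ℝ := b₀.re / 2 with hε
    have hεpos : 0 < ε := by positivity
    have key := hasDerivAt_integral_of_dominated_loc_of_deriv_le (μ := volume.restrict (Set.Ioi 0))
      (F := fun b t => (t : ℂ) ^ (s - 1) * Complex.exp (-(b * t)))
      (F' := fun b t => -((t : ℂ) ^ s * Complex.exp (-(b * t))))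
      (x₀ := b₀) (bound := fun t => t ^ s.re * Real.exp (-ε * t)) (Metric.ball_mem_nhds b₀ hεpos)
      (Eventually.of_forall fun b => meas (s - 1) b)
      (hint (s - 1) b₀ (by simp [Complex.sub_re]; linarith) hb₀')
      ((meas s b₀).neg)
      ?_ (aux_integrable (by linarith) hεpos) ?_
    · exact (key.2.differentiableAt.differentiableWithinAt)
    · -- bound
      filter_upwards [ae_restrict_mem measurableSet_Ioi] with t ht b hb
      have hbre : ε ≤ b.re := by
        have h2 : ‖b - b₀‖ < ε := by
          simpa [Metric.mem_ball, dist_eq_norm] using hb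
        have h3 : |(b - b₀).re| < ε := lt_of_le_of_lt (Complex.abs_re_le_norm _) h2
        rw [Complex.sub_re, abs_lt] at h3
        have := h3.1
        rw [hε] at this ⊢
        linarith
      rw [norm_neg, hnorm s b t ht]
      have ht' : (0:ℝ) < t := ht
      gcongr
    · -- differentiability in b
      filter_upwards [ae_restrict_mem measurableSet_Ioi] with t ht b hb
      have ht' : (0:ℝ) < t := ht
      have h1 : HasDerivAt (fun b : ℂ => -(b * t)) (-(t:ℂ)) b := by
        simpa using ((hasDerivAt_id b).mul_const (t:ℂ)).fun_neg
      have h2 : HasDerivAt (fun b : ℂ => Complex.exp (-(b * t)))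
          (-(t:ℂ) * Complex.exp (-(b * t))) b := by
        simpa [mul_comm] using h1.cexp
      have h3 := h2.const_mul ((t:ℂ) ^ (s - 1))
      convert h3 using 1
      · rfl
      have hne : (t : ℂ) ≠ 0 := by exact_mod_cast ht'.ne'
      have : (t : ℂ) ^ s = (t : ℂ) ^ (s - 1) * (t : ℂ) := by
        nth_rewrite 1 [show s = s - 1 + 1 by ring]
        rw [Complex.cpow_add _ _ hne, Complex.cpow_one]
      rw [this]; ring
  -- g is differentiable on U
  have hgd : DifferentiableOn ℂ g U := by
    intro b hb
    have hb' : b ∈ Complex.slitPlane := Or.inl hb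
    exact (((differentiableAt_id.cpow (differentiableAt_const _) hb').mul
      (differentiableAt_const _))).differentiableWithinAt
  -- equality on the positive real axis
  have hreal : ∀ r : ℝ, 0 < r → f (r : ℂ) = g (r : ℂ) := by
    intro r hr
    have := Complex.integral_cpow_mul_exp_neg_mul_Ioi hs hr
    rw [hf, hg]
    simp only at this ⊢
    rw [this]
    congr 1
    rw [one_div, Complex.inv_cpow _ _ ?_, ← Complex.cpow_neg]
    · rw [Complex.arg_ofReal_of_nonneg hr.le]
      exact Real.pi_ne_zero.symm
  -- identity theorem
  have hEq : Set.EqOn f g U := by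
    have h1U : (1 : ℂ) ∈ U := by simp [hUdef]
    refine AnalyticOnNhd.eqOn_of_preconnected_of_frequently_eq
      (hfd.analyticOnNhd hU) (hgd.analyticOnNhd hU)
      ((convex_halfSpace_re_gt 0).isPreconnected) h1U ?_
    have htend : Tendsto (fun r : ℝ => (r : ℂ)) (nhdsWithin 1 (Set.Ioi 1))
        (nhdsWithin (1 : ℂ) {(1:ℂ)}ᶜ) := by
      apply tendsto_nhdsWithin_of_tendsto_nhds_of_eventually_within
      · exact (Complex.continuous_ofReal.tendsto 1).mono_left nhdsWithin_le_nhds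
      · filter_upwards [self_mem_nhdsWithin] with r hr
        simp only [Set.mem_compl_iff, Set.mem_singleton_iff]
        exact_mod_cast (ne_of_gt hr)
    refine htend.frequently ?_
    refine Eventually.frequently ?_
    filter_upwards [self_mem_nhdsWithin] with r hr
    exact hreal r (lt_trans one_pos hr)
  intro b hb
  exact hEq hb

lemma closed_form (a : ℝ) (ha : 0 < a) (s : ℂ) (hs : 0 < s.re)
    (hA : ∀ b : ℂ, 0 < b.re →
      ∫ t : ℝ in Set.Ioi 0, (t : ℂ) ^ (s - 1) * Complex.exp (-(b * t)) = b ^ (-s) * Complex.Gamma s)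
    (ε : ℝ) (hε : 0 < ε) :
    (∫ z : ℂ,
          Complex.exp (-2 * (π : ℂ) * Complex.I * ((a : ℂ) - (ε : ℂ) * Complex.I)
              * ((‖z‖ : ℝ) : ℂ) ^ 2)
            * (((‖z‖ : ℝ) : ℂ) ^ 2) ^ (s - 1)
          ∂((2 : ENNReal) • (volume : Measure ℂ)))
      = 2 * (π : ℂ) * Complex.Gamma s
          * ((2 * π * ε : ℝ) + (2 * π * a : ℝ) * Complex.I) ^ (-s) := by
  set b : ℂ := ((2 * π * ε : ℝ) : ℂ) + ((2 * π * a : ℝ) : ℂ) * Complex.I with hb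
  have hbre : 0 < b.re := by
    simp [hb, Complex.add_re, Complex.mul_re]
    positivity
  set g : ℝ → ℂ := fun t => (t : ℂ) ^ (s - 1) * Complex.exp (-(b * t)) with hgdef
  set f0 : ℝ → ℂ := fun r => g (r ^ 2) with hf0
  have hcoef : (-2 * (π : ℂ) * Complex.I * ((a : ℂ) - (ε : ℂ) * Complex.I)) = -b := by
    rw [hb]
    push_cast
    ring_nf
    rw [Complex.I_sq]
    ring
  have hintegrand : ∀ z : ℂ,
      Complex.exp (-2 * (π : ℂ) * Complex.I * ((a : ℂ) - (ε : ℂ) * Complex.I)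
          * ((‖z‖ : ℝ) : ℂ) ^ 2)
        * (((‖z‖ : ℝ) : ℂ) ^ 2) ^ (s - 1) = f0 ‖z‖ := by
    intro z
    rw [hf0, hgdef]
    rw [hcoef]
    push_cast
    ring_nf
  rw [integral_smul_measure]
  simp only [hintegrand]
  rw [MeasureTheory.integral_fun_norm_addHaar (volume : Measure ℂ) f0]
  have hvol : (volume : Measure ℂ).real (Metric.ball 0 1) = π := by
    rw [measureReal_def, Complex.volume_ball]
    simp
  have hdim : Module.finrank ℝ ℂ = 2 := Complex.finrank_real_complex
  rw [hdim, hvol]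
  -- the radial integral
  have h2 : ∫ x in Ioi (0:ℝ), ((|2| * x ^ ((2:ℝ) - 1)) : ℝ) • g (x ^ (2:ℝ))
      = ∫ t in Ioi (0:ℝ), g t := integral_comp_rpow_Ioi g two_ne_zero
  have hcongr : ∀ y ∈ Ioi (0:ℝ),
      y ^ (2 - 1) • f0 y = (1/2 : ℝ) • (((|2| * y ^ ((2:ℝ) - 1)) : ℝ) • g (y ^ (2:ℝ))) := by
    intro y hy
    have hy' : (0:ℝ) < y := hy
    have hr1 : y ^ ((2:ℝ) - 1) = y := by norm_num
    have hr2 : y ^ (2:ℝ) = y ^ 2 := by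
      rw [show (2:ℝ) = ((2:ℕ):ℝ) by norm_num, Real.rpow_natCast]
    rw [smul_smul, hr2, hf0]
    have h3 : (1/2:ℝ) * (|2| * y ^ ((2:ℝ) - 1)) = y ^ (2 - 1) := by
      rw [hr1]; norm_num; ring
    rw [h3]
  rw [MeasureTheory.setIntegral_congr_fun measurableSet_Ioi hcongr, integral_smul, h2,
    hA b hbre]
  rw [ENNReal.toReal_ofNat]
  push_cast
  simp only [smul_eq_mul, nsmul_eq_mul, Complex.real_smul]
  push_cast
  ring

lemma value_eq (a : ℝ) (ha : 0 < a) (s : ℂ) :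
    2 * (π : ℂ) * Complex.Gamma s * (((2 * π * 0 : ℝ) : ℂ) + ((2 * π * a : ℝ) : ℂ) * Complex.I) ^ (-s)
      = (a : ℂ) ^ (-s) * Complex.exp (-s * (π : ℂ) * Complex.I / 2)
        * Complex.Gamma s / (2 * (π : ℂ)) ^ (s - 1) := by
  have h2πa : (0:ℝ) < 2 * π * a := by positivity
  set w : ℂ := ((2 * π * a : ℝ) : ℂ) * Complex.I with hwdef
  have hsimp : ((2 * π * 0 : ℝ) : ℂ) + ((2 * π * a : ℝ) : ℂ) * Complex.I = w := by
    rw [hwdef]; norm_num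
  rw [hsimp]
  have hw : w ≠ 0 := by
    rw [hwdef]
    apply mul_ne_zero _ Complex.I_ne_zero
    exact_mod_cast h2πa.ne'
  have ha' : (a : ℂ) ≠ 0 := by exact_mod_cast ha.ne'
  have h2π : (2 * (π : ℂ)) ≠ 0 := by
    have : (0:ℝ) < 2 * π := by positivity
    exact_mod_cast this.ne'
  have hlogw : Complex.log w = (Real.log (2 * π * a) : ℂ) + (π / 2 : ℝ) * Complex.I := by
    rw [Complex.log]
    have h1 : ‖w‖ = 2 * π * a := by
      rw [hwdef, norm_mul, Complex.norm_I, Complex.norm_real, Real.norm_eq_abs, abs_of_pos h2πa]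
      ring
    have h2 : Complex.arg w = π / 2 := by
      rw [hwdef, Complex.arg_real_mul _ h2πa, Complex.arg_I]
    rw [h1, h2]
  have hloga : Complex.log (a : ℂ) = (Real.log a : ℂ) := (Complex.ofReal_log ha.le).symm
  have hlog2π : Complex.log (2 * (π : ℂ)) = (Real.log (2 * π) : ℂ) := by
    rw [show (2 * (π : ℂ)) = ((2 * π : ℝ) : ℂ) by push_cast; ring]
    exact (Complex.ofReal_log (by positivity)).symm
  rw [Complex.cpow_def_of_ne_zero hw, Complex.cpow_def_of_ne_zero ha',
    Complex.cpow_def_of_ne_zero h2π, hlogw, hloga, hlog2π,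
    eq_div_iff (Complex.exp_ne_zero _)]
  have h2πexp : 2 * (π : ℂ) = Complex.exp ((Real.log (2 * π) : ℝ) : ℂ) := by
    rw [← hlog2π, Complex.exp_log h2π]
  rw [h2πexp]
  have hlogmul : (Real.log (2 * π * a) : ℂ) = (Real.log (2 * π) : ℂ) + (Real.log a : ℂ) := by
    rw [← Complex.ofReal_add, ← Real.log_mul (by positivity) ha.ne']
  calc Complex.exp ((Real.log (2*π) : ℝ) : ℂ) * Complex.Gamma s *
        Complex.exp (((Real.log (2 * π * a) : ℂ) + ((π / 2 : ℝ) : ℂ) * Complex.I) * -s) *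
        Complex.exp (((Real.log (2*π) : ℝ) : ℂ) * (s - 1))
      = Complex.exp (((Real.log (2*π) : ℝ) : ℂ)
          + ((Real.log (2 * π * a) : ℂ) + ((π / 2 : ℝ) : ℂ) * Complex.I) * -s
          + ((Real.log (2*π) : ℝ) : ℂ) * (s - 1)) * Complex.Gamma s := by
        rw [Complex.exp_add, Complex.exp_add]; ring
    _ = Complex.exp ((Real.log a : ℂ) * -s + (-s * (π:ℂ) * Complex.I / 2)) * Complex.Gamma s := by
        rw [hlogmul]
        congr 2
        push_cast
        ring
    _ = _ := by rw [Complex.exp_add]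

/-- For `a > 0` and `Re s > 0`,
`∫_ℂ e^{−2πi a |z|²} |z|_ℂ^s d^×z = a^{−s} e^{−sπi/2} Γ(s)/(2π)^{s−1}`,
where `|z|_ℂ = |z|²`, `d^×z = dz/|z|_ℂ` and `dz` is the self-dual additive Haar
measure of `ℂ` (twice the Lebesgue measure); the integral is understood as the
limit, as `ε → 0⁺`, of the absolutely convergent integrals with `a` replaced by
`a − iε`. -/
theorem mellin_complex_second_degree_character (a : ℝ) (ha : 0 < a)
    (s : ℂ) (hs : 0 < s.re) :
    Tendsto
      (fun ε : ℝ =>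
        ∫ z : ℂ,
          Complex.exp (-2 * (π : ℂ) * Complex.I * ((a : ℂ) - (ε : ℂ) * Complex.I)
              * ((‖z‖ : ℝ) : ℂ) ^ 2)
            * (((‖z‖ : ℝ) : ℂ) ^ 2) ^ (s - 1)
          ∂((2 : ENNReal) • (volume : Measure ℂ)))
      (nhdsWithin 0 (Set.Ioi 0))
      (nhds ((a : ℂ) ^ (-s) * Complex.exp (-s * (π : ℂ) * Complex.I / 2)
        * Complex.Gamma s / (2 * (π : ℂ)) ^ (s - 1))) := by
  have hA := gammaIntegral_complex_coeff hs
  set Φ : ℝ → ℂ := fun ε => 2 * (π : ℂ) * Complex.Gamma s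
      * (((2 * π * ε : ℝ) : ℂ) + ((2 * π * a : ℝ) : ℂ) * Complex.I) ^ (-s) with hΦ
  have hcont : Tendsto Φ (nhdsWithin 0 (Set.Ioi 0)) (nhds (Φ 0)) := by
    have hm : ContinuousAt (fun ε : ℝ =>
        (((2 * π * ε : ℝ) : ℂ) + ((2 * π * a : ℝ) : ℂ) * Complex.I)) 0 := by
      apply ContinuousAt.add _ continuousAt_const
      exact Complex.continuous_ofReal.continuousAt.comp
        ((continuous_const.mul continuous_id).continuousAt)
    have hmem : (((2 * π * (0:ℝ) : ℝ) : ℂ) + ((2 * π * a : ℝ) : ℂ) * Complex.I)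
        ∈ Complex.slitPlane := by
      refine Or.inr ?_
      have : (0:ℝ) < 2 * π * a := by positivity
      simp [Complex.add_im, Complex.mul_im, this.ne']
    have : ContinuousAt Φ 0 := by
      exact ContinuousAt.mul continuousAt_const (hm.cpow continuousAt_const hmem)
    exact this.continuousWithinAt.tendsto
  have hval : Φ 0 = (a : ℂ) ^ (-s) * Complex.exp (-s * (π : ℂ) * Complex.I / 2)
      * Complex.Gamma s / (2 * (π : ℂ)) ^ (s - 1) := value_eq a ha s
  rw [← hval]
  refine hcont.congr' ?_
  filter_upwards [self_mem_nhdsWithin] with ε hε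
  exact (closed_form a ha s hs hA ε hε).symm
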